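/- Let N be a positive integer and let x ∈ {0,1}^N be a nonzero binary vector. Let b ∈ ℝ^N be defined by b_n = |(F x)_n|, and let b̃ = b + η for some η ∈ ℂ^N. If ‖η‖_∞ < 1/(8‖x‖₀), then ‖F⁻¹(b̃ ⊙ b̃) − Aut_p(x)‖_∞ < 1/2. -/

import Mathlib

open scoped BigOperators
open Finset

/-- Discrete Fourier transform of `x ∈ ℂ^N`. -/
noncomputable def dft {N : ℕ} (x : Fin N → ℂ) (n : Fin N) : ℂ :=
  ∑ k : Fin N, x k * Complex.exp (-2 * Real.pi * Complex.I * ((k : ℕ) : ℂ) * ((n : ℕ) : ℂ) / (N : ℂ))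

/-- Inverse discrete Fourier transform. -/
noncomputable def idft {N : ℕ} (u : Fin N → ℂ) (j : Fin N) : ℂ :=
  (1 / (N : ℂ)) * ∑ n : Fin N, u n * Complex.exp (2 * Real.pi * Complex.I * ((j : ℕ) : ℂ) * ((n : ℕ) : ℂ) / (N : ℂ))

/-- `M`-point oversampled discrete Fourier transform of `x ∈ ℂ^N`. -/
noncomputable def odft {N : ℕ} (M : ℕ) (x : Fin N → ℂ) (n : Fin M) : ℂ :=
  ∑ k : Fin N, x k * Complex.exp (-2 * Real.pi * Complex.I * ((k : ℕ) : ℂ) * ((n : ℕ) : ℂ) / (M : ℂ))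

/-- Periodic autocorrelation of `x ∈ ℂ^N`. -/
noncomputable def autp {N : ℕ} (x : Fin N → ℂ) (j : Fin N) : ℂ :=
  ∑ k : Fin N, x (k + j) * (starRingEnd ℂ) (x k)

/-- Extension of `x ∈ ℂ^N` to `ℤ` by zero. -/
noncomputable def extz {N : ℕ} (x : Fin N → ℂ) (i : ℤ) : ℂ :=
  if h : 0 ≤ i ∧ i < (N : ℤ) then x ⟨i.toNat, by omega⟩ else 0

/-- (Regular) autocorrelation of `x ∈ ℂ^N`, as a function on `ℤ`. -/
noncomputable def aut {N : ℕ} (x : Fin N → ℂ) (j : ℤ) : ℂ :=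
  ∑ k : Fin N, extz x (((k : ℕ) : ℤ) + j) * (starRingEnd ℂ) (extz x ((k : ℕ) : ℤ))

/-- Circular convolution on `ℂ^N`. -/
noncomputable def cconv {N : ℕ} (v x : Fin N → ℂ) (j : Fin N) : ℂ :=
  ∑ k : Fin N, v k * x (j - k)

/-- The ℓ² norm on `ℂ^N`. -/
noncomputable def l2 {N : ℕ} (x : Fin N → ℂ) : ℝ :=
  Real.sqrt (∑ k : Fin N, ‖x k‖ ^ 2)

/-- The circular finite-difference operator. -/
noncomputable def nabla {N : ℕ} [NeZero N] (x : Fin N → ℂ) (k : Fin N) : ℂ :=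
  x (k + 1) - x k

/-- The sup norm on `ℂ^N`. -/
noncomputable def linf {N : ℕ} [NeZero N] (x : Fin N → ℂ) : ℝ :=
  Finset.univ.sup' Finset.univ_nonempty (fun k => ‖x k‖)

/-- The sup norm on `ℝ^N`. -/
noncomputable def linfR {N : ℕ} [NeZero N] (x : Fin N → ℝ) : ℝ :=
  Finset.univ.sup' Finset.univ_nonempty (fun k => |x k|)

/-- Cyclic index shift: `k ↦ (k + s) mod N`. -/
def shiftIdx {N : ℕ} [NeZero N] (k : Fin N) (s : ℕ) : Fin N :=
  ⟨((k : ℕ) + s) % N, Nat.mod_lt _ (Nat.pos_of_ne_zero (NeZero.ne N))⟩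

/-- A window of length `W` with constant value `a`, extended by zero. -/
noncomputable def win (W : ℕ) (a : ℂ) (i : ℤ) : ℂ :=
  if 0 ≤ i ∧ i < (W : ℤ) then a else 0


private lemma orth' {N : ℕ} [NeZero N] (m : ℤ) :
    ∑ n : Fin N, Complex.exp (2 * Real.pi * Complex.I * (m : ℂ) * ((n : ℕ) : ℂ) / (N : ℂ))
      = if (N : ℤ) ∣ m then (N : ℂ) else 0 := by
  have hN : (N : ℂ) ≠ 0 := Nat.cast_ne_zero.mpr (NeZero.ne N)
  set z := Complex.exp (2 * Real.pi * Complex.I * (m : ℂ) / N) with hz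
  have hterm : ∀ n : Fin N,
      Complex.exp (2 * Real.pi * Complex.I * (m : ℂ) * ((n : ℕ) : ℂ) / N) = z ^ (n : ℕ) := by
    intro n
    rw [hz, ← Complex.exp_nat_mul]
    congr 1
    ring
  simp only [hterm]
  rw [Fin.sum_univ_eq_sum_range (fun i => z ^ i) N]
  have hzN : z ^ N = 1 := by
    rw [hz, ← Complex.exp_nat_mul]
    rw [show (N : ℂ) * (2 * Real.pi * Complex.I * (m : ℂ) / N) = (m : ℂ) * (2 * Real.pi * Complex.I) by
      field_simp]
    exact Complex.exp_int_mul_two_pi_mul_I m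
  by_cases hd : (N : ℤ) ∣ m
  · obtain ⟨c, rfl⟩ := hd
    have hz1 : z = 1 := by
      rw [hz]
      rw [show 2 * Real.pi * Complex.I * ((N * c : ℤ) : ℂ) / N = (c : ℂ) * (2 * Real.pi * Complex.I) by
        push_cast; field_simp]
      exact Complex.exp_int_mul_two_pi_mul_I c
    simp [hz1]
  · have hz1 : z ≠ 1 := by
      intro h
      rw [hz, Complex.exp_eq_one_iff] at h
      obtain ⟨t, ht⟩ := h
      apply hd
      refine ⟨t, ?_⟩
      have h2 : (2 * (Real.pi : ℂ) * Complex.I) ≠ 0 := by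
        simp [Real.pi_ne_zero, Complex.I_ne_zero]
      have h3 := congrArg (fun w => w * (N : ℂ)) ht
      rw [div_mul_cancel₀ _ hN] at h3
      have hmc : (m : ℂ) * (2 * (Real.pi : ℂ) * Complex.I)
          = ((t : ℂ) * N) * (2 * (Real.pi : ℂ) * Complex.I) := by linear_combination h3
      have : (m : ℂ) = (N : ℂ) * (t : ℂ) := by
        have := mul_right_cancel₀ h2 hmc
        rw [this]; ring
      exact_mod_cast this
    rw [geom_sum_eq hz1, hzN]
    simp [hd]

private lemma key' {N : ℕ} [NeZero N] (k j l : Fin N) :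
    (N : ℤ) ∣ (((l : ℕ) : ℤ) - ((k : ℕ) : ℤ) + ((j : ℕ) : ℤ)) ↔ l = k - j := by
  have hr := Fin.coe_int_sub_eq_ite k j
  have hl : ((l : ℕ) : ℤ) < N := by exact_mod_cast l.isLt
  have hl0 : (0 : ℤ) ≤ ((l : ℕ) : ℤ) := Int.ofNat_nonneg _
  have hrlt : (((k - j : Fin N) : ℕ) : ℤ) < N := by exact_mod_cast (k - j).isLt
  have hr0 : (0 : ℤ) ≤ (((k - j : Fin N) : ℕ) : ℤ) := Int.ofNat_nonneg _
  constructor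
  · rintro ⟨c, hc⟩
    have heq : ((l : ℕ) : ℤ) = (((k - j : Fin N) : ℕ) : ℤ) := by
      split_ifs at hr with h
      · have : ((l : ℕ) : ℤ) - (((k - j : Fin N) : ℕ) : ℤ) = N * c := by
          rw [hr]; linarith [hc]
        have h0 : ((l : ℕ) : ℤ) - (((k - j : Fin N) : ℕ) : ℤ) = 0 :=
          Int.eq_zero_of_abs_lt_dvd ⟨c, this⟩ (by rw [abs_sub_lt_iff]; constructor <;> omega)
        linarith
      · have : ((l : ℕ) : ℤ) - (((k - j : Fin N) : ℕ) : ℤ) = N * (c - 1) := by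
          rw [hr]; ring_nf; linarith [hc]
        have h0 : ((l : ℕ) : ℤ) - (((k - j : Fin N) : ℕ) : ℤ) = 0 :=
          Int.eq_zero_of_abs_lt_dvd ⟨c - 1, this⟩ (by rw [abs_sub_lt_iff]; constructor <;> omega)
        linarith
    have : (l : ℕ) = ((k - j : Fin N) : ℕ) := by exact_mod_cast heq
    exact Fin.ext this
  · rintro rfl
    split_ifs at hr with h
    · exact ⟨0, by rw [hr]; ring⟩
    · exact ⟨1, by rw [hr]; ring⟩

private lemma wk' {N : ℕ} [NeZero N] (y : Fin N → ℂ) (j : Fin N) :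
    idft (fun n => dft y n * (starRingEnd ℂ) (dft y n)) j = autp y j := by
  have hN : (N : ℂ) ≠ 0 := Nat.cast_ne_zero.mpr (NeZero.ne N)
  have step1 : ∀ n : Fin N,
      dft y n * (starRingEnd ℂ) (dft y n)
          * Complex.exp (2 * Real.pi * Complex.I * ((j : ℕ) : ℂ) * ((n : ℕ) : ℂ) / N)
        = ∑ k : Fin N, ∑ l : Fin N, (y k * (starRingEnd ℂ) (y l)) *
            Complex.exp (2 * Real.pi * Complex.I
              * (((((l : ℕ) : ℤ) - ((k : ℕ) : ℤ) + ((j : ℕ) : ℤ)) : ℤ) : ℂ)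
              * ((n : ℕ) : ℂ) / N) := by
    intro n
    unfold dft
    rw [map_sum, Finset.sum_mul_sum]
    rw [Finset.sum_mul]
    refine Finset.sum_congr rfl fun k _ => ?_
    rw [Finset.sum_mul]
    refine Finset.sum_congr rfl fun l _ => ?_
    rw [map_mul, ← Complex.exp_conj]
    have hconj : (starRingEnd ℂ) (-2 * Real.pi * Complex.I * ((l : ℕ) : ℂ) * ((n : ℕ) : ℂ) / N)
        = 2 * Real.pi * Complex.I * ((l : ℕ) : ℂ) * ((n : ℕ) : ℂ) / N := by
      simp only [map_div₀, map_mul, map_neg, map_ofNat, Complex.conj_I, Complex.conj_ofReal,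
        Complex.conj_natCast]
      ring
    rw [hconj]
    calc y k * Complex.exp (-2 * Real.pi * Complex.I * ((k : ℕ) : ℂ) * ((n : ℕ) : ℂ) / N)
          * ((starRingEnd ℂ) (y l)
            * Complex.exp (2 * Real.pi * Complex.I * ((l : ℕ) : ℂ) * ((n : ℕ) : ℂ) / N))
          * Complex.exp (2 * Real.pi * Complex.I * ((j : ℕ) : ℂ) * ((n : ℕ) : ℂ) / N)
        = (y k * (starRingEnd ℂ) (y l)) *
            (Complex.exp (-2 * Real.pi * Complex.I * ((k : ℕ) : ℂ) * ((n : ℕ) : ℂ) / N)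
            * Complex.exp (2 * Real.pi * Complex.I * ((l : ℕ) : ℂ) * ((n : ℕ) : ℂ) / N)
            * Complex.exp (2 * Real.pi * Complex.I * ((j : ℕ) : ℂ) * ((n : ℕ) : ℂ) / N)) := by
          ring
      _ = _ := by
          rw [← Complex.exp_add, ← Complex.exp_add]
          congr 2
          push_cast
          ring
  unfold idft
  rw [Finset.sum_congr rfl fun n _ => step1 n]
  rw [Finset.sum_comm]
  have step2 : ∀ k : Fin N,
      (∑ n : Fin N, ∑ l : Fin N, (y k * (starRingEnd ℂ) (y l)) *
          Complex.exp (2 * Real.pi * Complex.I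
            * (((((l : ℕ) : ℤ) - ((k : ℕ) : ℤ) + ((j : ℕ) : ℤ)) : ℤ) : ℂ)
            * ((n : ℕ) : ℂ) / N))
        = (y k * (starRingEnd ℂ) (y (k - j))) * N := by
    intro k
    rw [Finset.sum_comm]
    have inner : ∀ l : Fin N,
        (∑ n : Fin N, (y k * (starRingEnd ℂ) (y l)) *
            Complex.exp (2 * Real.pi * Complex.I
              * (((((l : ℕ) : ℤ) - ((k : ℕ) : ℤ) + ((j : ℕ) : ℤ)) : ℤ) : ℂ)
              * ((n : ℕ) : ℂ) / N))
          = (y k * (starRingEnd ℂ) (y l)) *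
              (if (N : ℤ) ∣ (((l : ℕ) : ℤ) - ((k : ℕ) : ℤ) + ((j : ℕ) : ℤ)) then (N : ℂ) else 0) := by
      intro l
      rw [← Finset.mul_sum, orth']
    rw [Finset.sum_congr rfl fun l _ => inner l]
    rw [Finset.sum_eq_single (k - j)]
    · rw [if_pos ((key' k j (k - j)).mpr rfl)]
    · intro l _ hl
      rw [if_neg (fun h => hl ((key' k j l).mp h)), mul_zero]
    · intro h; exact absurd (Finset.mem_univ _) h
  rw [Finset.sum_congr rfl fun k _ => step2 k]
  have : autp y j = ∑ k : Fin N, y k * (starRingEnd ℂ) (y (k - j)) := by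
    unfold autp
    exact Fintype.sum_equiv (Equiv.addRight j) _ _ (fun k => by simp)
  rw [this, Finset.mul_sum]
  refine Finset.sum_congr rfl fun k _ => ?_
  field_simp

open scoped Classical in
/-- denoising error bound for sparse binary signals. -/
theorem denoise_autp_binary {N : ℕ} [NeZero N] (x : Fin N → ℝ)
    (hx : ∀ k, x k = 0 ∨ x k = 1) (hx0 : x ≠ 0) (b : Fin N → ℝ)
    (hb : ∀ n, b n = ‖dft (fun k => (x k : ℂ)) n‖)
    (η : Fin N → ℂ)
    (hη : linf η < 1 / (8 * ((Finset.univ.filter fun k => x k ≠ 0).card : ℝ))) :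
    linf (fun j => idft (fun n => ((b n : ℂ) + η n) * ((b n : ℂ) + η n)) j
      - autp (fun k => (x k : ℂ)) j) < 1 / 2 := by
  classical
  set y : Fin N → ℂ := fun k => ((x k : ℝ) : ℂ) with hy
  set s := (Finset.univ.filter fun k => x k ≠ 0).card with hscard
  have hs1 : 1 ≤ s := by
    obtain ⟨k, hk⟩ := Function.ne_iff.mp hx0
    refine Finset.card_pos.mpr ⟨k, ?_⟩
    simp only [Finset.mem_filter, Finset.mem_univ, true_and]
    simpa using hk
  have hsR : (1 : ℝ) ≤ (s : ℝ) := by exact_mod_cast hs1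
  have hx_nonneg : ∀ k, 0 ≤ x k := by
    intro k; rcases hx k with h | h <;> simp [h]
  have hsum_x : ∑ k : Fin N, x k = (s : ℝ) := by
    rw [hscard, ← Finset.sum_filter_ne_zero Finset.univ]
    have h1 : ∀ k ∈ Finset.univ.filter (fun k => x k ≠ 0), x k = 1 :=
      fun k hk => (hx k).resolve_left (Finset.mem_filter.mp hk).2
    rw [Finset.sum_congr rfl h1, Finset.sum_const, nsmul_eq_mul, mul_one]
  have hNpos : 0 < N := Nat.pos_of_ne_zero (NeZero.ne N)
  have hNR : (0 : ℝ) < (N : ℝ) := by exact_mod_cast hNpos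
  have hb_bound : ∀ n, b n ≤ (s : ℝ) := by
    intro n
    rw [hb n]
    calc ‖dft y n‖
        ≤ ∑ k : Fin N, ‖y k *
            Complex.exp (-2 * Real.pi * Complex.I * ((k : ℕ) : ℂ) * ((n : ℕ) : ℂ) / N)‖ := by
          unfold dft
          exact norm_sum_le _ _
      _ = ∑ k : Fin N, x k := by
          refine Finset.sum_congr rfl fun k _ => ?_
          rw [norm_mul]
          have he : ‖Complex.exp
              (-2 * Real.pi * Complex.I * ((k : ℕ) : ℂ) * ((n : ℕ) : ℂ) / N)‖ = 1 := by
            rw [show (-2 * Real.pi * Complex.I * ((k : ℕ) : ℂ) * ((n : ℕ) : ℂ) / N : ℂ)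
                = ((-2 * Real.pi * (k : ℕ) * (n : ℕ) / N : ℝ) : ℂ) * Complex.I by
              push_cast; ring]
            simp [Complex.norm_exp]
          rw [he, mul_one, hy]
          simp [abs_of_nonneg (hx_nonneg k)]
      _ = (s : ℝ) := hsum_x
  have hb0 : ∀ n, 0 ≤ b n := by
    intro n; rw [hb n]; exact norm_nonneg _
  set ε := linf η with hεdef
  have hεn : ∀ n, ‖η n‖ ≤ ε := by
    intro n
    rw [hεdef, linf]
    exact Finset.le_sup' (fun k => ‖η k‖) (Finset.mem_univ n)
  have hε0 : 0 ≤ ε := le_trans (norm_nonneg _) (hεn ⟨0, hNpos⟩)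
  rw [linf, Finset.sup'_lt_iff]
  intro j _
  have hBn : ∀ n : Fin N, ((b n : ℂ) + η n) * ((b n : ℂ) + η n)
      - dft y n * (starRingEnd ℂ) (dft y n)
      = 2 * (b n : ℂ) * η n + η n * η n := by
    intro n
    have hb2 : ((b n : ℂ)) * ((b n : ℂ)) = dft y n * (starRingEnd ℂ) (dft y n) := by
      rw [hb n, Complex.mul_conj, ← Complex.ofReal_mul, Complex.normSq_eq_norm_sq]
      push_cast; ring
    linear_combination hb2
  have hdiff : idft (fun n => ((b n : ℂ) + η n) * ((b n : ℂ) + η n)) j - autp y j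
      = (1 / (N : ℂ)) * ∑ n : Fin N, (2 * (b n : ℂ) * η n + η n * η n) *
          Complex.exp (2 * Real.pi * Complex.I * ((j : ℕ) : ℂ) * ((n : ℕ) : ℂ) / N) := by
    rw [← wk' y j]
    unfold idft
    rw [← mul_sub, ← Finset.sum_sub_distrib]
    congr 1
    refine Finset.sum_congr rfl fun n _ => ?_
    rw [← sub_mul, hBn n]
  rw [hdiff]
  have hterm : ∀ n : Fin N, ‖(2 * (b n : ℂ) * η n + η n * η n) *
      Complex.exp (2 * Real.pi * Complex.I * ((j : ℕ) : ℂ) * ((n : ℕ) : ℂ) / N)‖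
      ≤ 2 * (s : ℝ) * ε + ε * ε := by
    intro n
    rw [norm_mul]
    have he : ‖Complex.exp
        (2 * Real.pi * Complex.I * ((j : ℕ) : ℂ) * ((n : ℕ) : ℂ) / N)‖ = 1 := by
      rw [show (2 * Real.pi * Complex.I * ((j : ℕ) : ℂ) * ((n : ℕ) : ℂ) / N : ℂ)
          = ((2 * Real.pi * (j : ℕ) * (n : ℕ) / N : ℝ) : ℂ) * Complex.I by
        push_cast; ring]
      simp [Complex.norm_exp]
    rw [he, mul_one]
    calc ‖2 * (b n : ℂ) * η n + η n * η n‖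
        ≤ ‖2 * (b n : ℂ) * η n‖ + ‖η n * η n‖ :=
          norm_add_le _ _
      _ = 2 * b n * ‖η n‖ + ‖η n‖ * ‖η n‖ := by
          rw [norm_mul, norm_mul, norm_mul]
          simp [abs_of_nonneg (hb0 n)]
      _ ≤ 2 * (s : ℝ) * ε + ε * ε := by
          have h1 := hb_bound n
          have h2 := hεn n
          have h3 := norm_nonneg (η n)
          nlinarith
  have hsum_bound : ‖∑ n : Fin N, (2 * (b n : ℂ) * η n + η n * η n) *
      Complex.exp (2 * Real.pi * Complex.I * ((j : ℕ) : ℂ) * ((n : ℕ) : ℂ) / N)‖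
      ≤ (N : ℝ) * (2 * (s : ℝ) * ε + ε * ε) := by
    calc ‖∑ n : Fin N, _‖ ≤ ∑ n : Fin N, ‖(2 * (b n : ℂ) * η n + η n * η n) *
          Complex.exp (2 * Real.pi * Complex.I * ((j : ℕ) : ℂ) * ((n : ℕ) : ℂ) / N)‖ :=
        norm_sum_le _ _
      _ ≤ ∑ _n : Fin N, (2 * (s : ℝ) * ε + ε * ε) :=
        Finset.sum_le_sum fun n _ => hterm n
      _ = (N : ℝ) * (2 * (s : ℝ) * ε + ε * ε) := by
        rw [Finset.sum_const, Finset.card_univ, Fintype.card_fin, nsmul_eq_mul]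
  have habs1 : ‖1 / (N : ℂ)‖ = 1 / (N : ℝ) := by
    rw [norm_div, norm_one]
    simp
  have hfin : 2 * (s : ℝ) * ε + ε * ε < 1 / 2 := by
    have h8 : (0 : ℝ) < 8 * (s : ℝ) := by linarith
    have h9 : ε * (8 * (s : ℝ)) < 1 := (lt_div_iff₀ h8).mp hη
    nlinarith [mul_le_mul_of_nonneg_right hsR hε0]
  calc ‖(1 / (N : ℂ)) * ∑ n : Fin N, (2 * (b n : ℂ) * η n + η n * η n) *
        Complex.exp (2 * Real.pi * Complex.I * ((j : ℕ) : ℂ) * ((n : ℕ) : ℂ) / N)‖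
      = (1 / (N : ℝ)) * ‖∑ n : Fin N, (2 * (b n : ℂ) * η n + η n * η n) *
        Complex.exp (2 * Real.pi * Complex.I * ((j : ℕ) : ℂ) * ((n : ℕ) : ℂ) / N)‖ := by
        rw [norm_mul, habs1]
    _ ≤ (1 / (N : ℝ)) * ((N : ℝ) * (2 * (s : ℝ) * ε + ε * ε)) := by
        have : (0 : ℝ) ≤ 1 / (N : ℝ) := by positivity
        exact mul_le_mul_of_nonneg_left hsum_bound this
    _ = 2 * (s : ℝ) * ε + ε * ε := by field_simp
    _ < 1 / 2 := hfin
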